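/- Combining the above: for a symmetric positive definite matrix S, the acceptance region 2q-1 < (a s_{i,j} - b/2)/√(b²/4+ac) < 1-2q of the Neyman-structure test is equivalent to the condition |r^{i,j}| < 1-2q on the sample partial correlation r^{i,j} = -S^{i,j}/√(S^{i,i}S^{j,j}). Hence the UMPU test coincides with a two-sided threshold test on the sample partial correlation. -/

import Mathlib

open Matrix MeasureTheory Real

/-- The matrix `A` with the two symmetric entries at positions `(i,j)` and `(j,i)`
replaced by `x`. -/
def updPair {N : ℕ} (A : Matrix (Fin N) (Fin N) ℝ) (i j : Fin N) (x : ℝ) :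
    Matrix (Fin N) (Fin N) ℝ :=
  fun k l => if (k = i ∧ l = j) ∨ (k = j ∧ l = i) then x else A k l

/-- The `(i,j)`-cofactor of `M`: `(-1)^(i+j)` times the determinant of `M` with
row `i` and column `j` deleted. -/
noncomputable def cof {N : ℕ} (M : Matrix (Fin (N + 1)) (Fin (N + 1)) ℝ)
    (i j : Fin (N + 1)) : ℝ :=
  (-1 : ℝ) ^ ((i : ℕ) + (j : ℕ)) * (M.submatrix i.succAbove j.succAbove).det

/-- The determinant of `M` with rows `i, i.succAbove j'` and columns
`i, i.succAbove j'` deleted (the cofactor of the 2×2 principal block). -/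
noncomputable def minor2 {N : ℕ} (M : Matrix (Fin (N + 2)) (Fin (N + 2)) ℝ)
    (i : Fin (N + 2)) (j' : Fin (N + 1)) : ℝ :=
  (M.submatrix (i.succAbove ∘ j'.succAbove) (i.succAbove ∘ j'.succAbove)).det

/-- A cofactor is the corresponding (transposed) entry of the adjugate matrix. -/
lemma cof_eq_adjugate {N : ℕ} (M : Matrix (Fin (N + 1)) (Fin (N + 1)) ℝ)
    (k l : Fin (N + 1)) : cof M k l = M.adjugate l k := by
  rw [adjugate_apply, det_succ_row _ k]
  rw [Finset.sum_eq_single l]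
  · simp [cof, updateRow_apply, Pi.single_apply, fun r => (Fin.succAbove_ne k r)]
  · intro m _ hm
    simp [updateRow_apply, Pi.single_apply, hm.symm, Ne.symm hm]
  · simp

/-- Rank-two update formula for the determinant of `updPair S i j x`. -/
lemma det_updPair {N : ℕ} (S : Matrix (Fin (N + 2)) (Fin (N + 2)) ℝ) (hS : S.IsSymm)
    (hpd : S.PosDef) (i j : Fin (N + 2)) (hij : i ≠ j) (x : ℝ) :
    (updPair S i j x).det = S.det * (1 + 2 * (S⁻¹ i j) * (x - S i j) +
      ((S⁻¹ i j) ^ 2 - (S⁻¹ i i) * (S⁻¹ j j)) * (x - S i j) ^ 2) := by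
  set t : ℝ := x - S i j with ht
  set U : Matrix (Fin (N + 2)) (Fin 2) ℝ :=
    fun k p => if k = (if p = 0 then i else j) then t else 0 with hU
  set V : Matrix (Fin 2) (Fin (N + 2)) ℝ :=
    fun p l => if l = (if p = 0 then j else i) then 1 else 0 with hV
  have hM : updPair S i j x = S + U * V := by
    ext k l
    simp only [updPair, Matrix.add_apply, Matrix.mul_apply, Fin.sum_univ_two]
    simp only [hU, hV]
    by_cases hki : k = i <;> by_cases hkj : k = j <;>
      by_cases hli : l = i <;> by_cases hlj : l = j <;>
      simp_all [hS.apply, hij, Ne.symm hij] <;> ring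
  have hinv : S * S⁻¹ = 1 := Matrix.mul_nonsing_inv S hpd.det_pos.ne'.isUnit
  have hfac : S + U * V = S * (1 + S⁻¹ * U * V) := by
    rw [Matrix.mul_add, Matrix.mul_one, ← Matrix.mul_assoc, ← Matrix.mul_assoc, hinv,
      Matrix.one_mul]
  rw [hM, hfac, det_mul, det_one_add_mul_comm]
  congr 1
  have hsymm : S⁻¹ j i = S⁻¹ i j := by
    have h := hpd.inv.isHermitian
    have := congrFun (congrFun h i) j
    simpa [Matrix.conjTranspose_apply] using this
  rw [det_fin_two]
  simp only [Matrix.add_apply, Matrix.mul_apply, Matrix.one_apply, Fin.sum_univ_two,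
    if_pos rfl]
  simp only [hU, hV]
  simp [Finset.mul_sum, mul_ite, mul_comm, Finset.sum_ite_eq', hsymm]
  ring

/-- for `S` symmetric positive definite, the Neyman-structure acceptance
region `2q-1 < (a s_{i,j} - b/2)/√(b²/4+ac) < 1-2q` is equivalent to
`|r^{i,j}| < 1-2q` where `r^{i,j} = -S^{i,j}/√(S^{i,i} S^{j,j})` is the sample
partial correlation. -/
theorem umpu_test_eq_partialCorr_test {N : ℕ}
    (S : Matrix (Fin (N + 2)) (Fin (N + 2)) ℝ) (hS : S.IsSymm) (hpd : S.PosDef)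
    (i j : Fin (N + 2)) (hij : i < j) (a b c q : ℝ)
    (hdet : ∀ x : ℝ, (updPair S i j x).det = -a * x ^ 2 + b * x + c)
    (hq0 : 0 < q) (hq : q < 1 / 2) :
    (2 * q - 1 < (a * S i j - b / 2) / Real.sqrt (b ^ 2 / 4 + a * c) ∧
      (a * S i j - b / 2) / Real.sqrt (b ^ 2 / 4 + a * c) < 1 - 2 * q) ↔
    |(-(cof S i j)) / Real.sqrt (cof S i i * cof S j j)| < 1 - 2 * q := by
  have hij' : i ≠ j := ne_of_lt hij
  set D : ℝ := S.det with hD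
  have hDne : D ≠ 0 := hpd.det_pos.ne'
  set α : ℝ := S⁻¹ i j with hα
  set β : ℝ := S⁻¹ i i with hβ
  set γ : ℝ := S⁻¹ j j with hγ
  set s : ℝ := S i j with hs
  have hsymm : S⁻¹ j i = α := by
    have h := hpd.inv.isHermitian
    have := congrFun (congrFun h i) j
    simpa [Matrix.conjTranspose_apply] using this
  have hE : ∀ x : ℝ, -a * x ^ 2 + b * x + c =
      D * (1 + 2 * α * (x - s) + (α ^ 2 - β * γ) * (x - s) ^ 2) := fun x =>
    (hdet x).symm.trans (det_updPair S hS hpd i j hij' x)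
  have h0 := hE 0
  have h1 := hE 1
  have h2 := hE (-1)
  have ha : a = D * (β * γ - α ^ 2) := by linear_combination (2 * h0 - h1 - h2) / 2
  have hb : b = 2 * D * α - 2 * D * (α ^ 2 - β * γ) * s := by linear_combination (h1 - h2) / 2
  have hc : c = D * (1 - 2 * α * s + (α ^ 2 - β * γ) * s ^ 2) := by linear_combination h0
  have hcof : ∀ k l : Fin (N + 2), cof S k l = D * S⁻¹ l k := by
    intro k l
    rw [cof_eq_adjugate, Matrix.inv_def]
    simp only [Matrix.smul_apply, Ring.inverse_eq_inv', smul_eq_mul]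
    field_simp
    rw [mul_div_assoc, hD, div_self hpd.det_pos.ne', mul_one]
  have key1 : -(cof S i j) = a * s - b / 2 := by
    rw [hcof i j, hsymm]
    linear_combination (1 / 2 : ℝ) * hb - s * ha
  have key2 : cof S i i * cof S j j = b ^ 2 / 4 + a * c := by
    rw [hcof i i, hcof j j, ha, hb, hc]
    ring
  rw [key2, key1, abs_lt]
  constructor <;> rintro ⟨h1', h2'⟩ <;> exact ⟨by linarith, by linarith⟩
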